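/- Let μ be a probability measure on ℝ such that the identity function x ↦ x is μ-integrable, let t ∈ ℝ, and let A ⊆ ℝ be a measurable set with μ(A) = μ((−∞, t]). Then ∫_{(−∞,t]} x dμ(x) ≤ ∫_A x dμ(x); that is, among all measurable selections of drivers of a prescribed total mass, the lower set of inconvenience costs minimizes the total inconvenience cost. -/

import Mathlib

open MeasureTheory Set

/-- Among all measurable sets `A` of drivers of prescribed mass
`μ A = μ (Iic t)`, the lower set `Iic t` of inconvenience costs minimizes
the total inconvenience cost. -/
theorem lower_set_minimizes_total_cost
    (μ : Measure ℝ) [IsProbabilityMeasure μ]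
    (hint : Integrable (fun x : ℝ => x) μ)
    (t : ℝ) (A : Set ℝ) (hA : MeasurableSet A)
    (hmass : μ A = μ (Iic t)) :
    ∫ x in Iic t, x ∂μ ≤ ∫ x in A, x ∂μ := by
  have hIic : MeasurableSet (Iic t) := measurableSet_Iic
  have hI1 : Integrable (fun x : ℝ => x) (μ.restrict (Iic t \ A)) :=
    hint.restrict
  have hI2 : Integrable (fun x : ℝ => x) (μ.restrict (A \ Iic t)) :=
    hint.restrict
  -- equal masses of the difference sets
  have hmeq : μ (Iic t \ A) = μ (A \ Iic t) := by
    have h1 : μ (Iic t \ A) + μ (Iic t ∩ A) = μ (Iic t) :=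
      measure_diff_add_inter _ hA
    have h2 : μ (A \ Iic t) + μ (A ∩ Iic t) = μ A :=
      measure_diff_add_inter _ hIic
    have hcap : μ (Iic t ∩ A) = μ (A ∩ Iic t) := by rw [inter_comm]
    have hfin1 : μ (Iic t ∩ A) ≠ ⊤ := measure_ne_top μ _
    rw [hmass, ← h1, hcap] at h2
    exact ((ENNReal.add_left_inj (measure_ne_top μ _)).mp h2).symm
  -- split the integrals
  have hsplit1 : ∫ x in Iic t, x ∂μ
      = (∫ x in Iic t ∩ A, x ∂μ) + ∫ x in Iic t \ A, x ∂μ := by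
    rw [← setIntegral_union (disjoint_sdiff_self_right.mono_left inter_subset_right)
      (hIic.diff hA) hint.integrableOn hint.integrableOn, inter_union_diff]
  have hsplit2 : ∫ x in A, x ∂μ
      = (∫ x in A ∩ Iic t, x ∂μ) + ∫ x in A \ Iic t, x ∂μ := by
    rw [← setIntegral_union (disjoint_sdiff_self_right.mono_left inter_subset_right)
      (hA.diff hIic) hint.integrableOn hint.integrableOn, inter_union_diff]
  have hcapeq : (∫ x in Iic t ∩ A, x ∂μ) = ∫ x in A ∩ Iic t, x ∂μ := by
    rw [inter_comm]
  -- key bounds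
  have hb1 : ∫ x in Iic t \ A, x ∂μ ≤ t * (μ (Iic t \ A)).toReal := by
    have : ∫ x in Iic t \ A, x ∂μ ≤ ∫ _x in Iic t \ A, t ∂μ := by
      refine setIntegral_mono_on hI1 (integrableOn_const (LT.lt.ne ?_))
        (hIic.diff hA) ?_
      · exact lt_of_le_of_lt (measure_mono diff_subset) (measure_lt_top μ _)
      · intro x hx; exact hx.1
    simpa [setIntegral_const, smul_eq_mul, mul_comm, measureReal_def] using this
  have hb2 : t * (μ (A \ Iic t)).toReal ≤ ∫ x in A \ Iic t, x ∂μ := by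
    have : ∫ _x in A \ Iic t, t ∂μ ≤ ∫ x in A \ Iic t, x ∂μ := by
      refine setIntegral_mono_on (integrableOn_const (LT.lt.ne ?_)) hI2
        (hA.diff hIic) ?_
      · exact lt_of_le_of_lt (measure_mono diff_subset) (measure_lt_top μ _)
      · intro x hx; exact le_of_lt (not_le.mp hx.2)
    simpa [setIntegral_const, smul_eq_mul, mul_comm, measureReal_def] using this
  rw [hsplit1, hsplit2, hcapeq]
  gcongr _ + ?_
  calc ∫ x in Iic t \ A, x ∂μ ≤ t * (μ (Iic t \ A)).toReal := hb1
    _ = t * (μ (A \ Iic t)).toReal := by rw [hmeq]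
    _ ≤ ∫ x in A \ Iic t, x ∂μ := hb2
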